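/- Let α ∈ (0,1], λ ∈ (0,1), and let G : [0,1] → ℝ be continuous and nondecreasing. Suppose u_λ ∈ (0,1) with u_λ < λ satisfies G(u_λ) = u_λ/λ, G(u) > u/λ for all u ∈ (0,u_λ), and G(u) < u/λ for all u ∈ (u_λ,1], and that G is differentiable at u_λ with G'(u_λ) < 1/λ. For F : [0,1] → ℝ define U(F,λ) = sup{u ∈ [0,1] : F(u) ≥ u/λ} (supremum of a nonempty set) and A(F) = α(1−λ)/(1 − U(F,λ)/λ). Then for every continuous H : [0,1] → ℝ and every family (H_t)_{t>0} of cadlag functions with ‖H_t − H‖_∞ → 0 as t → 0⁺, one has (A(G + t·H_t) − A(G))/t → α·φ'(u_λ)·H(u_λ)/(1/λ − G'(u_λ)) as t → 0⁺, where φ(x) = (1−λ)/(1 − x/λ), so that φ'(u_λ) = (1−λ)/(λ(1 − u_λ/λ)²). -/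

import Mathlib

open Filter Set

/-- A cadlag function on `[0,1]`: right-continuous on `[0,1)` and with left limits
at every point of `(0,1]`. -/
def Cadlag (f : ℝ → ℝ) : Prop :=
  (∀ x ∈ Set.Ico (0:ℝ) 1, ContinuousWithinAt f (Set.Ici x) x) ∧
  (∀ x ∈ Set.Ioc (0:ℝ) 1, ∃ l, Filter.Tendsto f (nhdsWithin x (Set.Iio x)) (nhds l))

/-- Convergence in sup norm on `[0,1]` as `t → 0⁺`. -/
def SupConv (Ht : ℝ → ℝ → ℝ) (H : ℝ → ℝ) : Prop :=
  ∀ ε > (0:ℝ), ∀ᶠ t in nhdsWithin (0:ℝ) (Set.Ioi 0),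
    ∀ x ∈ Set.Icc (0:ℝ) 1, |Ht t x - H x| ≤ ε

/-- The BH95 threshold at level `λ`: `U(F,λ) = sup{u ∈ [0,1] : F(u) ≥ u/λ}`. -/
noncomputable def Ubh (F : ℝ → ℝ) (lam : ℝ) : ℝ :=
  sSup {u ∈ Set.Icc (0:ℝ) 1 | F u ≥ u / lam}

set_option maxHeartbeats 2000000

/-- Hadamard differentiability at `G` of the BKY06(λ) level function
`A(F) = α(1−λ)/(1 − U(F,λ)/λ)`, with derivative
`H ↦ α·φ'(u_λ)·H(u_λ)/(1/λ − G'(u_λ))`, where `φ'(u_λ) = (1−λ)/(λ(1 − u_λ/λ)²)`. -/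
theorem stmt_11 (α lam ulam g' : ℝ) (G : ℝ → ℝ)
    (hα : α ∈ Set.Ioc (0:ℝ) 1) (hlam : lam ∈ Set.Ioo (0:ℝ) 1)
    (hGc : ContinuousOn G (Set.Icc 0 1))
    (hGmono : MonotoneOn G (Set.Icc 0 1))
    (hulam : ulam ∈ Set.Ioo (0:ℝ) 1) (hulamlt : ulam < lam)
    (hcross : G ulam = ulam / lam)
    (hbelow : ∀ u ∈ Set.Ioo (0:ℝ) ulam, G u > u / lam)
    (habove : ∀ u ∈ Set.Ioc ulam 1, G u < u / lam)
    (hG' : HasDerivWithinAt G g' (Set.Icc 0 1) ulam)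
    (hslope : g' < 1 / lam) :
    ∀ H : ℝ → ℝ, ContinuousOn H (Set.Icc 0 1) →
      ∀ Ht : ℝ → ℝ → ℝ, (∀ t ∈ Set.Ioi (0:ℝ), Cadlag (Ht t)) → SupConv Ht H →
      Filter.Tendsto
        (fun t => (α * (1 - lam) / (1 - Ubh (fun x => G x + t * Ht t x) lam / lam)
            - α * (1 - lam) / (1 - Ubh G lam / lam)) / t)
        (nhdsWithin (0:ℝ) (Set.Ioi 0))
        (nhds (α * ((1 - lam) / (lam * (1 - ulam / lam) ^ 2)) * H ulam
          / (1 / lam - g'))) := by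
  obtain ⟨hα0, hα1⟩ := hα
  obtain ⟨hl0, hl1⟩ := hlam
  obtain ⟨hu0, hu1⟩ := hulam
  intro H hHc Ht _ hsup
  -- basic constants
  have hlne : lam ≠ 0 := ne_of_gt hl0
  set d : ℝ := 1 / lam - g' with hd_def
  have hd0 : (0:ℝ) < d := sub_pos.mpr hslope
  set c : ℝ := H ulam / d with hc_def
  have hHcd : H ulam = c * d := by rw [hc_def]; field_simp
  clear_value d c
  -- Ubh G lam = ulam
  have hUG : Ubh G lam = ulam := by
    have hmem : ulam ∈ {u ∈ Set.Icc (0:ℝ) 1 | G u ≥ u / lam} :=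
      ⟨⟨hu0.le, hu1.le⟩, ge_of_eq hcross⟩
    refine le_antisymm (csSup_le ⟨ulam, hmem⟩ ?_) (le_csSup ⟨1, fun u hu => hu.1.2⟩ hmem)
    rintro u ⟨⟨hu0', hu1'⟩, hineq⟩
    by_contra hlt
    push_neg at hlt
    exact absurd hineq (not_le.mpr (habove u ⟨hlt, hu1'⟩))
  -- derivative as HasDerivAt
  have hDA : HasDerivAt G g' ulam := hG'.hasDerivAt (Icc_mem_nhds hu0 hu1)
  -- continuity of H at ulam
  have hHat : ContinuousAt H ulam := hHc.continuousAt (Icc_mem_nhds hu0 hu1)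
  -- bound on H
  obtain ⟨C, hC⟩ := isCompact_Icc.exists_bound_of_continuousOn hHc
  set M : ℝ := max C 0 with hM_def
  have hM0 : (0:ℝ) ≤ M := le_max_right _ _
  have hMb : ∀ x ∈ Set.Icc (0:ℝ) 1, |H x| ≤ M := fun x hx =>
    le_trans (hC x hx) (le_max_left _ _)
  clear_value M
  set D : ℝ → ℝ := fun t => Ubh (fun x => G x + t * Ht t x) lam with hD_def
  -- Key estimate: for every ε > 0, eventually the threshold is within t*ε of ulam + t*c
  have key : ∀ ε > (0:ℝ), ∀ᶠ t in nhdsWithin (0:ℝ) (Set.Ioi 0),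
      ulam + t * (c - ε) ≤ D t ∧ D t ≤ ulam + t * (c + ε) := by
    intro ε hε
    -- choose ε'' and η
    set ε'' : ℝ := ε * d / (4 * (|c| + ε + 1)) with hε''_def
    have hcε1 : (0:ℝ) < |c| + ε + 1 := by positivity
    have hε''0 : 0 < ε'' := by positivity
    set η : ℝ := ε * d / 8 with hη_def
    have hη0 : 0 < η := by positivity
    clear_value ε'' η
    have hbr1 : ε'' * (|c| + ε) + 2 * η ≤ ε * d / 2 := by
      have h1 : ε'' * (|c| + ε) ≤ ε'' * (|c| + ε + 1) :=
        mul_le_mul_of_nonneg_left (by linarith) hε''0.le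
      have h2 : ε'' * (|c| + ε + 1) = ε * d / 4 := by
        rw [hε''_def]; field_simp
      linarith
    have hε''d : ε'' < d := by
      have h6 : ε'' * (|c| + ε + 1) = ε * d / 4 := by
        rw [hε''_def]; field_simp
      have h7 : ε'' * ε < ε'' * (|c| + ε + 1) :=
        mul_lt_mul_of_pos_left (by linarith [abs_nonneg c]) hε''0
      have h8 : ε * ε'' < ε * (d / 4) := by linarith
      have h9 : ε'' < d / 4 := lt_of_mul_lt_mul_left h8 hε.le
      linarith
    -- little-o bound
    have hlo := (hasDerivAt_iff_isLittleO.mp hDA).def hε''0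
    rw [Metric.eventually_nhds_iff] at hlo
    obtain ⟨δ₁, hδ₁0, hδ₁⟩ := hlo
    -- continuity of H at ulam
    have hHat' := Metric.continuousAt_iff.mp hHat η hη0
    obtain ⟨δ₂, hδ₂0, hδ₂⟩ := hHat'
    -- choose δ
    set δ : ℝ := min (min δ₁ δ₂ / 2) (min ulam (1 - ulam) / 2) with hδ_def
    have hδ0 : 0 < δ := by
      have h1 : 0 < min δ₁ δ₂ := lt_min hδ₁0 hδ₂0
      have h2 : 0 < min ulam (1 - ulam) := lt_min hu0 (by linarith)
      exact lt_min (by linarith) (by linarith)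
    have hδδ₁ : δ < δ₁ := lt_of_le_of_lt (min_le_left _ _)
      (by have := min_le_left δ₁ δ₂; linarith)
    have hδδ₂ : δ < δ₂ := lt_of_le_of_lt (min_le_left _ _)
      (by have := min_le_right δ₁ δ₂; linarith)
    have hδu : δ ≤ ulam / 2 := le_trans (min_le_right _ _)
      (by have := min_le_left ulam (1 - ulam); linarith)
    have hδu' : δ ≤ (1 - ulam) / 2 := le_trans (min_le_right _ _)
      (by have := min_le_right ulam (1 - ulam); linarith)
    clear_value δ
    -- compactness on the far region
    have hKne : (Set.Icc (ulam + δ) 1).Nonempty := by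
      rw [Set.nonempty_Icc]; linarith
    obtain ⟨x₀, hx₀K, hx₀max⟩ := isCompact_Icc.exists_isMaxOn hKne
      (((hGc.mono (fun x hx => ⟨by linarith [hx.1], hx.2⟩)).sub
        ((continuous_id.div_const lam).continuousOn)) :
        ContinuousOn (fun u => G u - u / lam) (Set.Icc (ulam + δ) 1))
    set η₀ : ℝ := x₀ / lam - G x₀ with hη₀_def
    have hη₀0 : 0 < η₀ := by
      have := habove x₀ ⟨by linarith [hx₀K.1], hx₀K.2⟩
      rw [hη₀_def]
      linarith
    have hfar : ∀ u ∈ Set.Icc (ulam + δ) 1, G u - u / lam ≤ -η₀ := by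
      intro u hu
      have h5 := hx₀max hu
      simp only [Set.mem_setOf_eq, Pi.sub_apply] at h5
      rw [hη₀_def]
      linarith [h5]
    clear_value η₀
    -- the eventual filter statement
    have hsmall : Set.Ioo (0:ℝ) (min (δ / (|c| + ε + 1)) (η₀ / (M + η + 1)))
        ∈ nhdsWithin (0:ℝ) (Set.Ioi 0) := by
      apply Ioo_mem_nhdsGT_of_mem
      constructor
      · exact le_refl 0
      · exact lt_min (div_pos hδ0 hcε1) (div_pos hη₀0 (by positivity))
    filter_upwards [hsup η hη0, hsmall] with t hsupt ht
    obtain ⟨ht0, htm⟩ := ht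
    have htδ : t * (|c| + ε) < δ := by
      have h1 : t < δ / (|c| + ε + 1) := lt_of_lt_of_le htm (min_le_left _ _)
      have h2 : t * (|c| + ε + 1) < δ := by rwa [lt_div_iff₀ hcε1] at h1
      have h3 : t * (|c| + ε) ≤ t * (|c| + ε + 1) :=
        mul_le_mul_of_nonneg_left (by linarith) ht0.le
      linarith
    have htη₀ : t * (M + η) < η₀ := by
      have h1 : t < η₀ / (M + η + 1) := lt_of_lt_of_le htm (min_le_right _ _)
      have hMη1 : (0:ℝ) < M + η + 1 := by positivity
      rw [lt_div_iff₀ hMη1] at h1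
      have h3 : t * (M + η) ≤ t * (M + η + 1) :=
        mul_le_mul_of_nonneg_left (by linarith) ht0.le
      linarith
    -- the set S
    set F : ℝ → ℝ := fun x => G x + t * Ht t x with hF_def
    set S : Set ℝ := {u ∈ Set.Icc (0:ℝ) 1 | F u ≥ u / lam} with hS_def
    have hSbdd : BddAbove S := ⟨1, fun u hu => hu.1.2⟩
    -- the lower test point
    set a : ℝ := t * (c - ε) with ha_def
    clear_value a
    have haabs : |a| ≤ t * (|c| + ε) := by
      rw [ha_def, abs_mul, abs_of_pos ht0]
      have h4 : |c - ε| ≤ |c| + |ε| := abs_sub c ε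
      rw [abs_of_pos hε] at h4
      exact mul_le_mul_of_nonneg_left h4 ht0.le
    have haδ : |a| < δ := lt_of_le_of_lt haabs htδ
    set um : ℝ := ulam + a with hum_def
    clear_value um
    have humIcc : um ∈ Set.Icc (0:ℝ) 1 := by
      rw [abs_lt] at haδ
      constructor
      · have := haδ.1; rw [hum_def]; linarith
      · have := haδ.2; rw [hum_def]; linarith
    have hummem : um ∈ S := by
      refine ⟨humIcc, ?_⟩
      -- little-o bound at um
      have hdist : dist um ulam < δ₁ := by
        rw [Real.dist_eq, hum_def, add_sub_cancel_left]
        exact lt_trans haδ hδδ₁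
      have h1 := hδ₁ hdist
      rw [Real.norm_eq_abs, Real.norm_eq_abs] at h1
      have h1' : G um - G ulam - (um - ulam) * g' ≥ -(ε'' * |um - ulam|) := by
        have := (abs_le.mp h1).1
        simpa [smul_eq_mul] using this
      have hau : um - ulam = a := by rw [hum_def]; ring
      -- sup-norm and continuity bounds
      have h2 : |Ht t um - H um| ≤ η := hsupt um humIcc
      have h3 : |H um - H ulam| ≤ η := by
        have : dist um ulam < δ₂ := by
          rw [Real.dist_eq, hum_def, add_sub_cancel_left]
          exact lt_trans haδ hδδ₂
        have := hδ₂ this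
        rw [Real.dist_eq] at this
        linarith
      have hHtlb : Ht t um ≥ H ulam - 2 * η := by
        have := (abs_le.mp h2).1
        have := (abs_le.mp h3).1
        linarith
      -- combine
      have hGlb : G um ≥ ulam / lam + a * g' - ε'' * |a| := by
        rw [hau] at h1'
        linarith [hcross ▸ h1']
      have hmul : t * Ht t um ≥ t * (H ulam - 2 * η) :=
        mul_le_mul_of_nonneg_left hHtlb ht0.le
      have hkey : a * g' - a / lam + t * (H ulam - 2 * η) - ε'' * (t * (|c| + ε))
          = t * (ε * d - 2 * η - ε'' * (|c| + ε)) - t * ε * d / 2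
            + t * ε * d / 2 := by
        rw [ha_def, hHcd, hd_def]
        field_simp
        ring
      have hbpos : 0 ≤ t * (ε * d - 2 * η - ε'' * (|c| + ε)) := by
        apply mul_nonneg ht0.le
        linarith [hbr1, mul_pos hε hd0]
      have hεabs : ε'' * |a| ≤ ε'' * (t * (|c| + ε)) :=
        mul_le_mul_of_nonneg_left haabs hε''0.le
      have hsplit : um / lam = ulam / lam + a / lam := by
        rw [hum_def, add_div]
      show F um ≥ um / lam
      rw [hF_def]
      simp only
      linarith [hGlb, hmul, hεabs, hbpos, hkey, hsplit]
    have hSne : S.Nonempty := ⟨um, hummem⟩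
    have hDt : D t = sSup S := rfl
    constructor
    · -- lower bound
      rw [hDt]
      exact le_csSup hSbdd hummem
    · -- upper bound
      have hub : ∀ u ∈ S, u ≤ ulam + t * (c + ε) := by
        rintro u ⟨⟨hu0', hu1'⟩, hineq⟩
        by_contra hgt
        push_neg at hgt
        set b : ℝ := u - ulam with hb_def
        clear_value b
        have hbgt : b > t * (c + ε) := by rw [hb_def]; linarith
        -- sup-norm bound at u
        have h2 : |Ht t u - H u| ≤ η := hsupt u ⟨hu0', hu1'⟩
        rcases le_or_gt u (ulam + δ) with hnear | hfar'
        · -- near region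
          have hbabs : |b| ≤ δ := by
            rw [abs_le]
            constructor
            · have hA : |c + ε| ≤ |c| + ε := by
                have := abs_add_le c ε
                rw [abs_of_pos hε] at this; linarith
              have hB : t * -|c + ε| ≤ t * (c + ε) :=
                mul_le_mul_of_nonneg_left (neg_abs_le _) ht0.le
              have hCm : t * |c + ε| ≤ t * (|c| + ε) :=
                mul_le_mul_of_nonneg_left hA ht0.le
              rw [mul_neg] at hB
              rw [hb_def]; linarith [htδ]
            · rw [hb_def]; linarith
          have hdist : dist u ulam < δ₁ := by
            rw [Real.dist_eq, ← hb_def]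
            exact lt_of_le_of_lt hbabs hδδ₁
          have h1 := hδ₁ hdist
          rw [Real.norm_eq_abs, Real.norm_eq_abs] at h1
          have h1' : G u - G ulam - (u - ulam) * g' ≤ ε'' * |u - ulam| := by
            have := (abs_le.mp h1).2
            simpa [smul_eq_mul] using this
          have h3 : |H u - H ulam| ≤ η := by
            have : dist u ulam < δ₂ := by
              rw [Real.dist_eq, ← hb_def]
              exact lt_of_le_of_lt hbabs hδδ₂
            have := hδ₂ this
            rw [Real.dist_eq] at this
            linarith
          have hHtub : Ht t u ≤ H ulam + 2 * η := by
            have := (abs_le.mp h2).2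
            have := (abs_le.mp h3).2
            linarith
          have hGub : G u ≤ ulam / lam + b * g' + ε'' * |b| := by
            rw [← hb_def] at h1'
            linarith [hcross ▸ h1']
          have hmul : t * Ht t u ≤ t * (H ulam + 2 * η) :=
            mul_le_mul_of_nonneg_left hHtub ht0.le
          have hsplit : u / lam = ulam / lam + b / lam := by
            rw [hb_def]; field_simp; ring
          -- show F u < u / lam, contradiction
          have hcontra : F u < u / lam := by
            rw [hF_def]; simp only
            rcases le_or_gt 0 b with hb0 | hb0
            · -- b ≥ 0 : |b| = b
              rw [abs_of_nonneg hb0] at hGub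
              have hkey : b * g' - b / lam + ε'' * b = -(b * (d - ε'')) := by
                rw [hd_def]; field_simp; ring
              have hd'' : 0 < d - ε'' := by linarith [hε''d]
              have hstep : -(b * (d - ε'')) < -(t * (c + ε) * (d - ε'')) := by
                have := mul_lt_mul_of_pos_right hbgt hd''
                linarith
              have hfin : -(t * (c + ε) * (d - ε'')) + t * (H ulam + 2 * η)
                  = t * (-(ε * d) + (c + ε) * ε'' + 2 * η) := by
                rw [hHcd]; ring
              have hneg : t * (-(ε * d) + (c + ε) * ε'' + 2 * η) < 0 := by
                apply mul_neg_of_pos_of_neg ht0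
                have h4 : (c + ε) * ε'' ≤ (|c| + ε) * ε'' :=
                  mul_le_mul_of_nonneg_right (by linarith [le_abs_self c]) hε''0.le
                linarith [hbr1, mul_pos hε hd0]
              linarith [hGub, hmul, hsplit, hkey, hstep, hfin, hneg]
            · -- b < 0 : |b| = -b ≤ t*(|c|+ε)
              have hbabs' : |b| ≤ t * (|c| + ε) := by
                rw [abs_of_neg hb0]
                have hA : |c + ε| ≤ |c| + ε := by
                  have := abs_add_le c ε
                  rw [abs_of_pos hε] at this; linarith
                have hB : t * -|c + ε| ≤ t * (c + ε) :=
                  mul_le_mul_of_nonneg_left (neg_abs_le _) ht0.le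
                have hCm : t * |c + ε| ≤ t * (|c| + ε) :=
                  mul_le_mul_of_nonneg_left hA ht0.le
                rw [mul_neg] at hB
                linarith
              have hεb : ε'' * |b| ≤ ε'' * (t * (|c| + ε)) :=
                mul_le_mul_of_nonneg_left hbabs' hε''0.le
              have hkey : b * g' - b / lam = -(b * d) := by
                rw [hd_def]; field_simp; ring
              have hstep : -(b * d) < -(t * (c + ε) * d) := by
                have := mul_lt_mul_of_pos_right hbgt hd0
                linarith
              have hfin : -(t * (c + ε) * d) + t * (H ulam + 2 * η)
                  + ε'' * (t * (|c| + ε))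
                  = t * (-(ε * d) + ε'' * (|c| + ε) + 2 * η) := by
                rw [hHcd]; ring
              have hneg : t * (-(ε * d) + ε'' * (|c| + ε) + 2 * η) < 0 := by
                apply mul_neg_of_pos_of_neg ht0
                linarith [hbr1, mul_pos hε hd0]
              linarith [hGub, hmul, hsplit, hkey, hstep, hfin, hneg, hεb]
          exact absurd hineq (not_le.mpr hcontra)
        · -- far region
          have huK : u ∈ Set.Icc (ulam + δ) 1 := ⟨hfar'.le, hu1'⟩
          have hG1 := hfar u huK
          have hHtb : Ht t u ≤ M + η := by
            have := (abs_le.mp h2).2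
            have := (abs_le.mp (hMb u ⟨hu0', hu1'⟩)).2
            linarith
          have hmul : t * Ht t u ≤ t * (M + η) :=
            mul_le_mul_of_nonneg_left hHtb ht0.le
          have hcontra : F u < u / lam := by
            rw [hF_def]; simp only
            linarith [htη₀]
          exact absurd hineq (not_le.mpr hcontra)
      have : sSup S ≤ ulam + t * (c + ε) := csSup_le hSne hub
      rw [hDt]
      exact this
  -- convergence of the difference quotient of the threshold
  have hψ : Tendsto (fun t => (D t - ulam) / t) (nhdsWithin (0:ℝ) (Set.Ioi 0))
      (nhds c) := by
    rw [Metric.tendsto_nhds]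
    intro ε hε
    filter_upwards [key (ε/2) (by linarith), self_mem_nhdsWithin] with t ⟨h1, h2⟩ ht
    have ht0 : (0:ℝ) < t := ht
    rw [Real.dist_eq]
    have hq : (D t - ulam) / t - c = (D t - (ulam + t * c)) / t := by
      field_simp
      ring
    have : |(D t - ulam) / t - c| ≤ ε / 2 := by
      rw [hq, abs_div, abs_of_pos ht0, div_le_iff₀ ht0, abs_le]
      constructor
      · have h1' : ulam + t * (c - ε/2) ≤ D t := h1
        nlinarith [h1']
      · have h2' : D t ≤ ulam + t * (c + ε/2) := h2
        nlinarith [h2']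
    linarith
  -- D tends to ulam
  have hDlim : Tendsto D (nhdsWithin (0:ℝ) (Set.Ioi 0)) (nhds ulam) := by
    have h1 : Tendsto (fun t => ulam + t * ((D t - ulam) / t))
        (nhdsWithin (0:ℝ) (Set.Ioi 0)) (nhds (ulam + 0 * c)) :=
      tendsto_const_nhds.add ((tendsto_id.mono_left nhdsWithin_le_nhds).mul hψ)
    rw [zero_mul, add_zero] at h1
    apply h1.congr'
    filter_upwards [self_mem_nhdsWithin] with t ht
    have ht0 : (0:ℝ) < t := ht
    field_simp
    ring
  -- eventually D t < lam
  have hDlt : ∀ᶠ t in nhdsWithin (0:ℝ) (Set.Ioi 0), D t < lam :=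
    hDlim.eventually_lt_const hulamlt
  have hulamlam : (0:ℝ) < 1 - ulam / lam := by
    rw [sub_pos, div_lt_one hl0]; exact hulamlt
  -- final limit
  have hlim : Tendsto (fun t => α * (1 - lam) / lam * ((D t - ulam) / t)
      / ((1 - D t / lam) * (1 - ulam / lam)))
      (nhdsWithin (0:ℝ) (Set.Ioi 0))
      (nhds (α * (1 - lam) / lam * c / ((1 - ulam / lam) * (1 - ulam / lam)))) := by
    apply Tendsto.div (hψ.const_mul _)
    · exact (tendsto_const_nhds.sub (hDlim.div_const lam)).mul tendsto_const_nhds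
    · positivity
  have hval : α * (1 - lam) / lam * c / ((1 - ulam / lam) * (1 - ulam / lam))
      = α * ((1 - lam) / (lam * (1 - ulam / lam) ^ 2)) * H ulam / d := by
    rw [hc_def]
    have h1 : (1:ℝ) - ulam / lam ≠ 0 := ne_of_gt hulamlam
    have h2 : d ≠ 0 := ne_of_gt hd0
    field_simp
  rw [← hval]
  apply hlim.congr'
  filter_upwards [hDlt, self_mem_nhdsWithin] with t hDt ht
  have ht0 : (0:ℝ) < t := ht
  rw [hUG]
  have h1 : (1:ℝ) - D t / lam ≠ 0 := by
    have : D t / lam < 1 := (div_lt_one hl0).mpr hDt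
    linarith
  have h2 : (1:ℝ) - ulam / lam ≠ 0 := ne_of_gt hulamlam
  have ht' : t ≠ 0 := ne_of_gt ht0
  have h1' : lam - D t ≠ 0 := ne_of_gt (sub_pos.mpr hDt)
  have h2' : lam - ulam ≠ 0 := ne_of_gt (sub_pos.mpr hulamlt)
  show α * (1 - lam) / lam * ((D t - ulam) / t) / ((1 - D t / lam) * (1 - ulam / lam))
    = (α * (1 - lam) / (1 - D t / lam) - α * (1 - lam) / (1 - ulam / lam)) / t
  rw [show (1:ℝ) - D t / lam = (lam - D t) / lam by rw [sub_div, div_self hlne],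
      show (1:ℝ) - ulam / lam = (lam - ulam) / lam by rw [sub_div, div_self hlne]]
  field_simp
  ring
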